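/- Intertwining of the Radon transform with differentiation: for Schwartz f on ℝ², ∂/∂s [Rf](θ,s) = R[Θ_θ · ∇f](θ,s), i.e., the s-derivative of the Radon transform equals the Radon transform of the directional derivative of f in the direction Θ_θ. -/

import Mathlib

open MeasureTheory

/-- The 2D Radon transform. -/
noncomputable def radon (f : ℝ × ℝ → ℝ) (θ s : ℝ) : ℝ :=
  ∫ t : ℝ, f (s * Real.cos θ + t * Real.sin θ, s * Real.sin θ - t * Real.cos θ)

private lemma schwartz_quad_bound (h : SchwartzMap (ℝ × ℝ) ℝ) :
    ∃ C, 0 ≤ C ∧ ∀ x : ℝ × ℝ, ‖h x‖ * (2 + x.1 ^ 2 + x.2 ^ 2) ≤ C := by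
  obtain ⟨C₀, _, hC₀⟩ := h.decay 0 0
  obtain ⟨C₂, _, hC₂⟩ := h.decay 2 0
  refine ⟨2 * C₀ + 2 * C₂, ?_, ?_⟩
  · have h0 := hC₀ 0
    have h2 := hC₂ 0
    simp only [pow_zero, one_mul, norm_iteratedFDeriv_zero, norm_zero] at h0 h2
    nlinarith [norm_nonneg (h 0)]
  · intro x
    have h0 := hC₀ x
    have h2 := hC₂ x
    simp only [pow_zero, one_mul, norm_iteratedFDeriv_zero] at h0 h2
    have hx1 : ‖x.1‖ ≤ ‖x‖ := norm_fst_le x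
    have hx2 : ‖x.2‖ ≤ ‖x‖ := norm_snd_le x
    have e1 : x.1 ^ 2 ≤ ‖x‖ ^ 2 := by
      rw [← sq_abs x.1, ← Real.norm_eq_abs]
      exact pow_le_pow_left₀ (norm_nonneg _) hx1 2
    have e2 : x.2 ^ 2 ≤ ‖x‖ ^ 2 := by
      rw [← sq_abs x.2, ← Real.norm_eq_abs]
      exact pow_le_pow_left₀ (norm_nonneg _) hx2 2
    nlinarith [norm_nonneg (h x), norm_nonneg x]

private lemma schwartz_line_bound (h : SchwartzMap (ℝ × ℝ) ℝ) :
    ∃ C, 0 ≤ C ∧ ∀ (θ s t : ℝ),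
      ‖h (s * Real.cos θ + t * Real.sin θ, s * Real.sin θ - t * Real.cos θ)‖
        ≤ C * (1 + t ^ 2)⁻¹ := by
  obtain ⟨C, hC0, hC⟩ := schwartz_quad_bound h
  refine ⟨C, hC0, fun θ s t => ?_⟩
  set x : ℝ × ℝ := (s * Real.cos θ + t * Real.sin θ, s * Real.sin θ - t * Real.cos θ) with hx
  have hsum : x.1 ^ 2 + x.2 ^ 2 = s ^ 2 + t ^ 2 := by
    have hsc := Real.sin_sq_add_cos_sq θ
    simp only [hx]
    nlinarith [hsc]
  have hb := hC x
  have h1 : (0:ℝ) < 1 + t ^ 2 := by positivity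
  rw [← div_eq_mul_inv, le_div_iff₀ h1]
  nlinarith [norm_nonneg (h x), sq_nonneg s, hsum]

private lemma line_integrable (h : SchwartzMap (ℝ × ℝ) ℝ) (θ s : ℝ) :
    Integrable (fun t : ℝ =>
      h (s * Real.cos θ + t * Real.sin θ, s * Real.sin θ - t * Real.cos θ)) := by
  obtain ⟨C, hC0, hC⟩ := schwartz_line_bound h
  have hint : Integrable (fun t : ℝ => C * (1 + t ^ 2)⁻¹) :=
    integrable_inv_one_add_sq.const_mul C
  refine hint.mono ?_ (Filter.Eventually.of_forall fun t => ?_)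
  · exact (h.continuous.comp (by fun_prop)).aestronglyMeasurable
  · have hb := hC θ s t
    rw [Real.norm_of_nonneg (by positivity : (0:ℝ) ≤ C * (1 + t ^ 2)⁻¹)]
    exact hb

/-- the Radon transform intertwines the `s`-derivative with the
directional derivative: `∂/∂s [Rf](θ,s) = R[Θ_θ·∇f](θ,s)` for Schwartz `f`. -/
theorem radon_deriv_eq_radon_directional (f : SchwartzMap (ℝ × ℝ) ℝ) (θ s : ℝ) :
    deriv (fun s' : ℝ => radon (⇑f) θ s') s
      = radon (fun x : ℝ × ℝ =>
          fderiv ℝ (⇑f) x (Real.cos θ, Real.sin θ)) θ s := by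
  set v : ℝ × ℝ := (Real.cos θ, Real.sin θ) with hv
  set g : SchwartzMap (ℝ × ℝ) ℝ := LineDeriv.lineDerivOpCLM ℝ (SchwartzMap (ℝ × ℝ) ℝ) v f with hgdef
  have hgapp : ∀ x, g x = fderiv ℝ (⇑f) x v := fun x => rfl
  obtain ⟨C, hC0, hC⟩ := schwartz_line_bound g
  have key := hasDerivAt_integral_of_dominated_loc_of_deriv_le
    (F := fun s' t => f (s' * Real.cos θ + t * Real.sin θ, s' * Real.sin θ - t * Real.cos θ))
    (F' := fun s' t => fderiv ℝ (⇑f)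
      (s' * Real.cos θ + t * Real.sin θ, s' * Real.sin θ - t * Real.cos θ) v)
    (bound := fun t => C * (1 + t ^ 2)⁻¹)
    (μ := volume) (x₀ := s) (Metric.ball_mem_nhds s one_pos)
    (Filter.Eventually.of_forall fun s' =>
      (f.continuous.comp (by fun_prop)).aestronglyMeasurable)
    (line_integrable f θ s)
    ?_ ?_ (integrable_inv_one_add_sq.const_mul C) ?_
  · have hd := key.2.deriv
    simpa [radon, hv] using hd
  · -- measurability of F' s
    show AEStronglyMeasurable (fun t : ℝ => fderiv ℝ (⇑f)
      (s * Real.cos θ + t * Real.sin θ, s * Real.sin θ - t * Real.cos θ) v) volume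
    have : (fun t : ℝ => fderiv ℝ (⇑f)
        (s * Real.cos θ + t * Real.sin θ, s * Real.sin θ - t * Real.cos θ) v)
        = fun t : ℝ => g (s * Real.cos θ + t * Real.sin θ, s * Real.sin θ - t * Real.cos θ) := by
      funext t; rw [hgapp]
    rw [this]
    exact (g.continuous.comp (by fun_prop)).aestronglyMeasurable
  · -- bound
    refine Filter.Eventually.of_forall fun t => fun s' _ => ?_
    show ‖fderiv ℝ (⇑f)
      (s' * Real.cos θ + t * Real.sin θ, s' * Real.sin θ - t * Real.cos θ) v‖ ≤ C * (1 + t ^ 2)⁻¹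
    rw [← hgapp]
    exact hC θ s' t
  · -- differentiability
    refine Filter.Eventually.of_forall fun t => fun s' _ => ?_
    have h1 : HasDerivAt (fun s' : ℝ => s' * Real.cos θ + t * Real.sin θ) (Real.cos θ) s' := by
      simpa using ((hasDerivAt_id s').mul_const (Real.cos θ)).add_const (t * Real.sin θ)
    have h2 : HasDerivAt (fun s' : ℝ => s' * Real.sin θ - t * Real.cos θ) (Real.sin θ) s' := by
      simpa using ((hasDerivAt_id s').mul_const (Real.sin θ)).sub_const (t * Real.cos θ)
    have hp : HasDerivAt (fun s' : ℝ =>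
        ((s' * Real.cos θ + t * Real.sin θ, s' * Real.sin θ - t * Real.cos θ) : ℝ × ℝ)) v s' :=
      h1.prodMk h2
    exact ((f.differentiable _).hasFDerivAt).comp_hasDerivAt s' hp
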